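/- The operator Z̄ = (1/3)(E₁₃ + E₂₃ - 2E₁₂) on (C²)^⊗3 satisfies Z̄³ = Z̄, i.e. Z̄ squares to the orthogonal projection onto the 4-dimensional code subspace spanned by (|010⟩-|100⟩)/√2, (|011⟩-|101⟩)/√2, (2|001⟩-|010⟩-|100⟩)/√6, (-2|110⟩+|011⟩+|101⟩)/√6, and hence R_L = exp(-iπZ̄) acts as -1 on this code subspace and as identity on its orthogonal complement. -/

import Mathlib

open Matrix

/-- Computational basis vector `|abc⟩` of the 3-qubit space. -/
noncomputable def ket3 (a b c : Fin 2) : Fin 2 × Fin 2 × Fin 2 → ℂ :=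
  fun x => if x = (a, b, c) then 1 else 0

/-- Swap of qubits 1 and 2. -/
noncomputable def E12 : Matrix (Fin 2 × Fin 2 × Fin 2) (Fin 2 × Fin 2 × Fin 2) ℂ :=
  Matrix.of fun p q => if q = (p.2.1, p.1, p.2.2) then 1 else 0

/-- Swap of qubits 1 and 3. -/
noncomputable def E13 : Matrix (Fin 2 × Fin 2 × Fin 2) (Fin 2 × Fin 2 × Fin 2) ℂ :=
  Matrix.of fun p q => if q = (p.2.2, p.2.1, p.1) then 1 else 0

/-- Swap of qubits 2 and 3. -/
noncomputable def E23 : Matrix (Fin 2 × Fin 2 × Fin 2) (Fin 2 × Fin 2 × Fin 2) ℂ :=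
  Matrix.of fun p q => if q = (p.1, p.2.2, p.2.1) then 1 else 0

/-- The 4-dimensional code subspace of the 3-qubit DFS. -/
noncomputable def codeSpace3 : Submodule ℂ (Fin 2 × Fin 2 × Fin 2 → ℂ) :=
  Submodule.span ℂ
    {(Real.sqrt 2 : ℂ)⁻¹ • (ket3 0 1 0 - ket3 1 0 0),
     (Real.sqrt 2 : ℂ)⁻¹ • (ket3 0 1 1 - ket3 1 0 1),
     (Real.sqrt 6 : ℂ)⁻¹ • ((2 : ℂ) • ket3 0 0 1 - ket3 0 1 0 - ket3 1 0 0),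
     (Real.sqrt 6 : ℂ)⁻¹ • ((-2 : ℂ) • ket3 1 1 0 + ket3 0 1 1 + ket3 1 0 1)}

namespace DFS3Aux
open scoped Nat
abbrev K := Fin 2 × Fin 2 × Fin 2
noncomputable def pM (f : K → K) : Matrix K K ℂ :=
  Matrix.of fun p q => if q = f p then 1 else 0

lemma pM_mul (f g : K → K) : pM f * pM g = pM (g ∘ f) := by
  ext p q
  rw [Matrix.mul_apply, Finset.sum_eq_single (f p)] <;> simp_all [pM]

lemma pM_one : pM id = 1 := by
  ext p q
  simp [pM, Matrix.one_apply, eq_comm]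

lemma pM_mulVec (f : K → K) (v : K → ℂ) : (pM f).mulVec v = fun p => v (f p) := by
  funext p
  rw [Matrix.mulVec, dotProduct, Finset.sum_eq_single (f p)] <;> simp_all [pM]

def t12 : K → K := fun p => (p.2.1, p.1, p.2.2)
def t13 : K → K := fun p => (p.2.2, p.2.1, p.1)
def t23 : K → K := fun p => (p.1, p.2.2, p.2.1)
def cy1 : K → K := fun p => (p.2.2, p.1, p.2.1)
def cy2 : K → K := fun p => (p.2.1, p.2.2, p.1)

-- example : t23 ∘ t13 = cy1 := rfl
-- example : t13 ∘ t23 = cy2 := rfl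
-- example : t13 ∘ t12 = cy1 := rfl
-- example : t12 ∘ t13 = cy2 := rfl
-- example : t23 ∘ t12 = cy2 := rfl
-- example : t12 ∘ t23 = cy1 := rfl
-- example : t13 ∘ t13 = id := rfl
-- example : t13 ∘ cy1 = t12 := rfl
-- example : t23 ∘ cy1 = t13 := rfl
-- example : t12 ∘ cy1 = t23 := rfl
-- example : t13 ∘ cy2 = t23 := rfl
-- example : t23 ∘ cy2 = t12 := rfl
-- example : t12 ∘ cy2 = t13 := rfl

noncomputable def S : Matrix K K ℂ := pM t13 + pM t23 - (2:ℂ) • pM t12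

lemma m11 : pM t13 * pM t13 = 1 := by rw [pM_mul]; exact pM_one
lemma m22 : pM t23 * pM t23 = 1 := by rw [pM_mul]; exact pM_one
lemma m33 : pM t12 * pM t12 = 1 := by rw [pM_mul]; exact pM_one
lemma m12 : pM t13 * pM t23 = pM cy1 := pM_mul _ _
lemma m21 : pM t23 * pM t13 = pM cy2 := pM_mul _ _
lemma m31 : pM t12 * pM t13 = pM cy1 := pM_mul _ _
lemma m13 : pM t13 * pM t12 = pM cy2 := pM_mul _ _
lemma m32 : pM t12 * pM t23 = pM cy2 := pM_mul _ _
lemma m23 : pM t23 * pM t12 = pM cy1 := pM_mul _ _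
lemma mc1a : pM cy1 * pM t13 = pM t12 := pM_mul _ _
lemma mc1b : pM cy1 * pM t23 = pM t13 := pM_mul _ _
lemma mc1c : pM cy1 * pM t12 = pM t23 := pM_mul _ _
lemma mc2a : pM cy2 * pM t13 = pM t23 := pM_mul _ _
lemma mc2b : pM cy2 * pM t23 = pM t12 := pM_mul _ _
lemma mc2c : pM cy2 * pM t12 = pM t13 := pM_mul _ _

lemma S_sq : S * S = (6:ℂ) • 1 - (3:ℂ) • (pM cy1 + pM cy2) := by
  simp only [S, add_mul, sub_mul, mul_add, mul_sub, smul_mul_assoc, mul_smul_comm,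
    m11, m22, m33, m12, m21, m31, m13, m32, m23]
  module

lemma S_cube : S * S * S = (9:ℂ) • S := by
  rw [S_sq]
  simp only [S, add_mul, sub_mul, mul_add, mul_sub, smul_mul_assoc, mul_smul_comm,
    Matrix.one_mul, mc1a, mc1b, mc1c, mc2a, mc2b, mc2c]
  module

noncomputable abbrev cpi : ℂ := (Real.pi : ℂ)

lemma cpi_ne : cpi ≠ 0 := by
  simpa using Complex.ofReal_ne_zero.mpr Real.pi_ne_zero

set_option maxHeartbeats 1000000 in
lemma exp_formula (A : Matrix K K ℂ) (h3 : A * A * A = (-cpi ^ 2) • A) :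
    NormedSpace.exp A = 1 + ((2:ℂ) / cpi ^ 2) • (A * A) := by
  have hodd : ∀ k : ℕ, A ^ (2 * k + 1) = ((-cpi ^ 2) ^ k) • A := by
    intro k
    induction k with
    | zero => simp
    | succ n ih =>
      have h : 2 * (n + 1) + 1 = (2 * n + 1) + 2 := by ring
      rw [h, pow_add, ih, smul_mul_assoc, pow_two A, ← mul_assoc, h3, smul_smul, ← pow_succ]
  have heven : ∀ k : ℕ, A ^ (2 * (k + 1)) = ((-cpi ^ 2) ^ k) • (A * A) := by
    intro k
    rw [show 2 * (k + 1) = (2 * k + 1) + 1 from by ring, pow_succ, hodd, smul_mul_assoc]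
  have hsin0 : Complex.sin cpi = 0 := by
    rw [← Complex.ofReal_sin, Real.sin_pi, Complex.ofReal_zero]
  have hcos0 : Complex.cos cpi = -1 := by
    rw [← Complex.ofReal_cos, Real.cos_pi]; norm_num
  -- odd part
  have hoddsum : HasSum (fun k : ℕ => ((2 * k + 1)!⁻¹ : ℂ) • A ^ (2 * k + 1)) 0 := by
    have h := (Complex.hasSum_sin cpi).mul_left (cpi⁻¹)
    rw [hsin0, mul_zero] at h
    have h2 : HasSum (fun n : ℕ => (((2 * n + 1)! : ℂ))⁻¹ * (-cpi ^ 2) ^ n) 0 := by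
      convert h using 2 with n
      · rfl
      have hf : ((2 * n + 1)! : ℂ) ≠ 0 := by exact_mod_cast (2*n+1).factorial_ne_zero
      rw [neg_pow, ← pow_mul]
      field_simp [cpi_ne]
      ring
    have h3' := h2.smul_const A
    rw [zero_smul] at h3'
    convert h3' using 2 with k
    rw [hodd k, smul_smul]
  -- even part
  have hshift : HasSum (fun n : ℕ => (-1 : ℂ) ^ (n + 1) * cpi ^ (2 * (n + 1)) / ((2 * (n + 1))! : ℂ)) (-2) := by
    rw [hasSum_nat_add_iff (f := fun n : ℕ => (-1 : ℂ) ^ n * cpi ^ (2 * n) / ((2 * n)! : ℂ)) 1]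
    convert Complex.hasSum_cos cpi using 1
    · rfl
    rw [hcos0]
    norm_num
  have h4 : HasSum (fun n : ℕ => (((2 * n + 2)! : ℂ))⁻¹ * (-cpi ^ 2) ^ n) (2 / cpi ^ 2) := by
    have h := hshift.mul_left (-(cpi ^ 2)⁻¹)
    have he : -(cpi ^ 2)⁻¹ * (-2) = 2 / cpi ^ 2 := by field_simp
    rw [he] at h
    convert h using 2 with n
    · rfl
    have hf : ((2 * (n + 1))! : ℂ) ≠ 0 := by exact_mod_cast (2*(n+1)).factorial_ne_zero
    have h2 : 2 * (n + 1) = 2 * n + 2 := by ring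
    rw [h2] at hf ⊢
    rw [neg_pow, ← pow_mul]
    field_simp [cpi_ne]
    ring
  have h6 : HasSum (fun k : ℕ => ((2 * (k + 1))!⁻¹ : ℂ) • A ^ (2 * (k + 1)))
      (((2:ℂ) / cpi ^ 2) • (A * A)) := by
    have h5 := h4.smul_const (A * A)
    convert h5 using 2 with k
    rw [heven k, smul_smul, show 2 * (k + 1) = 2 * k + 2 from by ring]
  have h7 := (hasSum_nat_add_iff (f := fun k : ℕ => ((2 * k)!⁻¹ : ℂ) • A ^ (2 * k)) 1).mp h6
  rw [Finset.sum_range_one] at h7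
  norm_num at h7
  have hevensum : HasSum (fun k : ℕ => ((2 * k)!⁻¹ : ℂ) • A ^ (2 * k))
      (1 + ((2:ℂ) / cpi ^ 2) • (A * A)) := by
    convert h7 using 1
    · rfl
    rw [add_comm]
  have hfull := HasSum.even_add_odd (f := fun n : ℕ => ((n)!⁻¹ : ℂ) • A ^ n) hevensum hoddsum
  rw [add_zero] at hfull
  rw [NormedSpace.exp_eq_tsum (𝕂 := ℂ)]
  exact hfull.tsum_eq

end DFS3Aux

set_option maxHeartbeats 1000000 in
open DFS3Aux in
/-- `Z̄³ = Z̄`, `Z̄²` is the orthogonal projection onto the code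
subspace, and `R_L = exp(-iπZ̄)` acts as `-1` on the code subspace and as the
identity on its orthogonal complement. -/
theorem leo_three_qubit_dfs
    (Zbar : Matrix (Fin 2 × Fin 2 × Fin 2) (Fin 2 × Fin 2 × Fin 2) ℂ)
    (hZ : Zbar = (1 / 3 : ℂ) • (E13 + E23 - (2 : ℂ) • E12))
    (R : Matrix (Fin 2 × Fin 2 × Fin 2) (Fin 2 × Fin 2 × Fin 2) ℂ)
    (hR : R = NormedSpace.exp ((-(Complex.I * (Real.pi : ℂ))) • Zbar)) :
    Zbar * Zbar * Zbar = Zbar ∧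
    (∀ v ∈ codeSpace3, (Zbar * Zbar).mulVec v = v) ∧
    (∀ w : Fin 2 × Fin 2 × Fin 2 → ℂ,
      (∀ v ∈ codeSpace3, dotProduct (star v) w = 0) →
      (Zbar * Zbar).mulVec w = 0) ∧
    (∀ v ∈ codeSpace3, R.mulVec v = -v) ∧
    (∀ w : Fin 2 × Fin 2 × Fin 2 → ℂ,
      (∀ v ∈ codeSpace3, dotProduct (star v) w = 0) →
      R.mulVec w = w) := by
  have hZS : Zbar = (1/3 : ℂ) • S := by rw [hZ]; rfl
  have hZ2 : Zbar * Zbar = (2/3 : ℂ) • 1 - (1/3 : ℂ) • (pM cy1 + pM cy2) := by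
    rw [hZS, smul_mul_smul_comm, S_sq]
    module
  have hZ3 : Zbar * Zbar * Zbar = Zbar := by
    rw [hZS, smul_mul_smul_comm, smul_mul_smul_comm, S_cube]
    module
  have hmv : ∀ u : K → ℂ, (Zbar * Zbar).mulVec u
      = fun p => (2/3 : ℂ) * u p - (1/3 : ℂ) * (u (cy1 p) + u (cy2 p)) := by
    intro u
    funext p
    rw [hZ2, Matrix.sub_mulVec, Matrix.smul_mulVec, Matrix.smul_mulVec,
      Matrix.one_mulVec, Matrix.add_mulVec, pM_mulVec, pM_mulVec]
    simp [smul_eq_mul]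
    ring
  have hproj : ∀ v ∈ codeSpace3, (Zbar * Zbar).mulVec v = v := by
    intro v hv
    induction hv using Submodule.span_induction with
    | mem x hx =>
      simp only [Set.mem_insert_iff, Set.mem_singleton_iff] at hx
      rcases hx with rfl | rfl | rfl | rfl <;>
      · rw [Matrix.mulVec_smul]
        congr 1
        rw [hmv]
        funext p
        obtain ⟨a, b, c⟩ := p
        fin_cases a <;> fin_cases b <;> fin_cases c <;>
          norm_num [ket3, cy1, cy2, Prod.ext_iff]
    | zero => simp
    | add x y hx hy ihx ihy => rw [Matrix.mulVec_add, ihx, ihy]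
    | smul a x hx ih => rw [Matrix.mulVec_smul, ih]
  have hperp : ∀ w : Fin 2 × Fin 2 × Fin 2 → ℂ,
      (∀ v ∈ codeSpace3, dotProduct (star v) w = 0) →
      (Zbar * Zbar).mulVec w = 0 := by
    intro w hw
    have hs2 : ((Real.sqrt 2 : ℝ) : ℂ) ≠ 0 := by simp [Real.sqrt_eq_zero']
    have hs6 : ((Real.sqrt 6 : ℝ) : ℂ) ≠ 0 := by simp [Real.sqrt_eq_zero']
    have e1 : w (0,1,0) = w (1,0,0) := by
      have h := hw ((Real.sqrt 2 : ℂ)⁻¹ • (ket3 0 1 0 - ket3 1 0 0))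
        (Submodule.subset_span (by simp))
      simp [dotProduct, Fintype.sum_prod_type, Fin.sum_univ_two, ket3, Prod.ext_iff,
        Pi.smul_apply, Pi.sub_apply, smul_eq_mul, map_ofNat] at h
      field_simp [hs2] at h
      linear_combination h
    have e2 : w (0,1,1) = w (1,0,1) := by
      have h := hw ((Real.sqrt 2 : ℂ)⁻¹ • (ket3 0 1 1 - ket3 1 0 1))
        (Submodule.subset_span (by simp))
      simp [dotProduct, Fintype.sum_prod_type, Fin.sum_univ_two, ket3, Prod.ext_iff,
        Pi.smul_apply, Pi.sub_apply, smul_eq_mul, map_ofNat] at h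
      field_simp [hs2] at h
      linear_combination h
    have e3 : 2 * w (0,0,1) - w (0,1,0) - w (1,0,0) = 0 := by
      have h := hw ((Real.sqrt 6 : ℂ)⁻¹ • ((2 : ℂ) • ket3 0 0 1 - ket3 0 1 0 - ket3 1 0 0))
        (Submodule.subset_span (by simp))
      simp [dotProduct, Fintype.sum_prod_type, Fin.sum_univ_two, ket3, Prod.ext_iff,
        Pi.smul_apply, Pi.sub_apply, smul_eq_mul, map_ofNat] at h
      field_simp [hs6] at h
      linear_combination h
    have e4 : -2 * w (1,1,0) + w (0,1,1) + w (1,0,1) = 0 := by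
      have h := hw ((Real.sqrt 6 : ℂ)⁻¹ • ((-2 : ℂ) • ket3 1 1 0 + ket3 0 1 1 + ket3 1 0 1))
        (Submodule.subset_span (by simp))
      simp [dotProduct, Fintype.sum_prod_type, Fin.sum_univ_two, ket3, Prod.ext_iff,
        Pi.smul_apply, Pi.sub_apply, Pi.add_apply, smul_eq_mul, map_ofNat] at h
      field_simp [hs6] at h
      linear_combination h
    rw [hmv]
    funext p
    obtain ⟨a, b, c⟩ := p
    fin_cases a <;> fin_cases b <;> fin_cases c <;>
      simp only [cy1, cy2, Pi.zero_apply, Fin.mk_zero, Fin.mk_one, Fin.isValue]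
    · ring
    · linear_combination (1/3 : ℂ) * e3
    · linear_combination (1/2 : ℂ) * e1 - (1/6 : ℂ) * e3
    · linear_combination (1/2 : ℂ) * e2 + (1/6 : ℂ) * e4
    · linear_combination (-1/2 : ℂ) * e1 - (1/6 : ℂ) * e3
    · linear_combination (-1/2 : ℂ) * e2 + (1/6 : ℂ) * e4
    · linear_combination (-1/3 : ℂ) * e4
    · ring
  have hA3 : ((-(Complex.I * cpi)) • Zbar) * ((-(Complex.I * cpi)) • Zbar) *
      ((-(Complex.I * cpi)) • Zbar) = (-cpi ^ 2) • ((-(Complex.I * cpi)) • Zbar) := by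
    rw [smul_mul_smul_comm, smul_mul_smul_comm, hZ3]
    simp only [smul_smul]
    congr 1
    linear_combination (-(Complex.I) * cpi ^ 3) * Complex.I_sq
  have hRf : R = 1 + (-2 : ℂ) • (Zbar * Zbar) := by
    rw [hR, exp_formula _ hA3]
    congr 1
    rw [smul_mul_smul_comm, smul_smul]
    congr 1
    have hp2 : cpi ^ 2 ≠ 0 := pow_ne_zero _ cpi_ne
    field_simp
    linear_combination Complex.I_sq
  refine ⟨hZ3, hproj, hperp, ?_, ?_⟩
  · intro v hv
    rw [hRf, Matrix.add_mulVec, Matrix.one_mulVec, Matrix.smul_mulVec, hproj v hv]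
    module
  · intro w hw
    rw [hRf, Matrix.add_mulVec, Matrix.one_mulVec, Matrix.smul_mulVec, hperp w hw]
    simp
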